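/- Let a_1, …, a_k be integers with gcd equal to g, not all zero, and v = (a_1, …, a_k) ∈ ℤ^k with k ≥ 1. For the complex h^p: Λ^p(ℤ^k) → Λ^{p+1}(ℤ^k), x ↦ v ∧ x, the cohomology group ker(h^p)/im(h^{p−1}) is isomorphic to (ℤ/gℤ)^{C(k−1, p−1)} for 1 ≤ p ≤ k, and vanishes for all other p. -/

import Mathlib

open ExteriorAlgebra

/-- Wedging with `v` as a linear map `Λ^p(ℤ^k) → Λ^{p+1}(ℤ^k)`. -/
noncomputable def wedgeMul (k : ℕ) (v : Fin k → ℤ) (p : ℕ) :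
    (⋀[ℤ]^p (Fin k → ℤ)) →ₗ[ℤ] (⋀[ℤ]^(p + 1) (Fin k → ℤ)) :=
  LinearMap.codRestrict _
    ((LinearMap.mulLeft ℤ (ι ℤ v)).comp (⋀[ℤ]^p (Fin k → ℤ)).subtype)
    (fun x => by
      have h1 : (ι ℤ v : ExteriorAlgebra ℤ (Fin k → ℤ)) ∈ ⋀[ℤ]^1 (Fin k → ℤ) := by
        simp [pow_one]
      have := Submodule.mul_mem_mul h1 x.2
      rwa [show (⋀[ℤ]^1 (Fin k → ℤ) : Submodule ℤ (ExteriorAlgebra ℤ (Fin k → ℤ))) *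
          ⋀[ℤ]^p (Fin k → ℤ) = ⋀[ℤ]^(p + 1) (Fin k → ℤ) from by
        rw [← pow_add, add_comm]] at this)

namespace Koszul

variable {k : ℕ}

/-- Index type: `p`-element subsets of `Fin k`. -/
abbrev Sets (k p : ℕ) := {s : Finset (Fin k) // s.card = p}

variable (b : Module.Basis (Fin k) ℤ (Fin k → ℤ))

/-- The wedge of basis vectors indexed by a `p`-subset, in increasing order. -/
noncomputable def eS (p : ℕ) (s : Sets k p) : ExteriorAlgebra ℤ (Fin k → ℤ) :=
  ιMulti ℤ p (fun i => b (s.1.orderEmbOfFin s.2 i))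

lemma eS_mem (p : ℕ) (s : Sets k p) : eS b p s ∈ ⋀[ℤ]^p (Fin k → ℤ) :=
  ιMulti_range ℤ p ⟨_, rfl⟩

/-- Dual functional picking out the coefficient of `eS b p s`. -/
noncomputable def lam (p : ℕ) (s : Sets k p) : ExteriorAlgebra ℤ (Fin k → ℤ) →ₗ[ℤ] ℤ :=
  liftAlternating <|
    Function.update (fun i => (0 : (Fin k → ℤ) [⋀^Fin i]→ₗ[ℤ] ℤ)) p
      ((Matrix.detRowAlternating).compLinearMap
        (LinearMap.pi fun j : Fin p =>
          (Finsupp.lapply (s.1.orderEmbOfFin s.2 j)).comp b.repr.toLinearMap))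

lemma lam_ιMulti (p : ℕ) (s : Sets k p) (m : Fin p → (Fin k → ℤ)) :
    lam b p s (ιMulti ℤ p m) =
      Matrix.det (Matrix.of fun i j => b.repr (m i) (s.1.orderEmbOfFin s.2 j)) := by
  rw [lam, liftAlternating_apply_ιMulti, Function.update_self]
  rfl

lemma lam_eS (p : ℕ) (s t : Sets k p) :
    lam b p s (eS b p t) = if s = t then 1 else 0 := by
  rw [eS, lam_ιMulti]
  split_ifs with h
  · subst h
    have : (Matrix.of fun i j =>
        b.repr (b (s.1.orderEmbOfFin s.2 i)) (s.1.orderEmbOfFin s.2 j)) = (1 : Matrix (Fin p) (Fin p) ℤ) := by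
      ext i j
      simp only [Matrix.of_apply, Module.Basis.repr_self, Finsupp.single_apply, Matrix.one_apply]
      by_cases hij : i = j
      · simp [hij]
      · rw [if_neg (fun hc => hij ((s.1.orderEmbOfFin s.2).injective hc)), if_neg hij]
    rw [this, Matrix.det_one]
  · -- find an element of t not in s
    have hts : ¬ t.1 ⊆ s.1 := fun hsub =>
      h (Subtype.ext (Finset.eq_of_subset_of_card_le hsub (by rw [s.2, t.2])).symm)
    obtain ⟨x, hxt, hxs⟩ := Finset.not_subset.1 hts
    obtain ⟨i0, hi0⟩ : ∃ i0, t.1.orderEmbOfFin t.2 i0 = x := by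
      have hr := Finset.range_orderEmbOfFin t.1 t.2
      have : x ∈ Set.range ⇑(t.1.orderEmbOfFin t.2) := by rw [hr]; exact_mod_cast hxt
      exact this
    refine Matrix.det_eq_zero_of_row_eq_zero i0 fun j => ?_
    simp only [Matrix.of_apply, Module.Basis.repr_self, Finsupp.single_apply]
    rw [hi0, if_neg]
    intro hc
    exact hxs (hc ▸ Finset.orderEmbOfFin_mem s.1 s.2 j)

lemma eS_linearIndependent (p : ℕ) : LinearIndependent ℤ (eS b p) := by
  rw [Fintype.linearIndependent_iff]
  intro c hc s
  have := congrArg (lam b p s) hc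
  rw [map_sum, map_zero] at this
  simp only [map_smul, lam_eS, smul_eq_mul, mul_ite, mul_one, mul_zero] at this
  rwa [Finset.sum_ite_eq (Finset.univ) s c, if_pos (Finset.mem_univ s)] at this

lemma span_eS (p : ℕ) :
    Submodule.span ℤ (Set.range (eS b p)) = ⋀[ℤ]^p (Fin k → ℤ) := by
  refine le_antisymm (Submodule.span_le.2 ?_) ?_
  · rintro _ ⟨s, rfl⟩
    exact eS_mem b p s
  · rw [← ιMulti_span_fixedDegree]
    refine Submodule.span_le.2 ?_
    rintro _ ⟨m, rfl⟩
    have e1 := MultilinearMap.map_sum (ιMulti ℤ p (M := Fin k → ℤ)).toMultilinearMap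
      (fun i (j : Fin k) => b.repr (m i) j • b j)
    have h2 : ∀ f : Fin p → Fin k,
        ((ιMulti ℤ p (M := Fin k → ℤ)).toMultilinearMap fun i => b.repr (m i) (f i) • b (f i)) ∈
          Submodule.span ℤ (Set.range (eS b p)) := ?_
    case _ =>
      have h3 := Submodule.sum_mem (Submodule.span ℤ (Set.range (eS b p)))
        (fun f (_ : f ∈ Finset.univ) => h2 f)
      rw [← e1] at h3
      convert h3 using 2
      exact iff_of_eq (congrArg (· ∈ Submodule.span ℤ (Set.range (eS b p))) (congrArg _ (funext fun i => (b.sum_repr (m i)).symm)))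
    intro f
    rw [MultilinearMap.map_smul_univ]
    refine Submodule.smul_mem _ _ ?_
    show (ιMulti ℤ p) (fun i => b (f i)) ∈ _
    by_cases hf : Function.Injective f
    · set s : Finset (Fin k) := Finset.univ.image f with hs
      have hcard : s.card = p := by
        rw [hs, Finset.card_image_of_injective _ hf, Finset.card_univ, Fintype.card_fin]
      have hmem : ∀ i, f i ∈ s := fun i => Finset.mem_image_of_mem f (Finset.mem_univ i)
      let e1 : Fin p ≃ {x // x ∈ s} := Equiv.ofBijective (fun i => ⟨f i, hmem i⟩)
        ⟨fun i j hij => hf (congrArg Subtype.val hij), by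
          rintro ⟨x, hx⟩
          obtain ⟨i, _, rfl⟩ := Finset.mem_image.1 hx
          exact ⟨i, rfl⟩⟩
      let σ : Equiv.Perm (Fin p) := e1.trans (s.orderIsoOfFin hcard).toEquiv.symm
      have hσ : ∀ i, f i = s.orderEmbOfFin hcard (σ i) := by
        intro i
        rw [← Finset.coe_orderIsoOfFin_apply]
        show f i = (((s.orderIsoOfFin hcard)) ((s.orderIsoOfFin hcard).toEquiv.symm (e1 i)) : Fin k)
        simp [σ, e1]
        rfl
      have hfun : (fun i => b (f i)) = (fun i => b (s.orderEmbOfFin hcard i)) ∘ σ := by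
        funext i
        simp only [Function.comp_apply]
        rw [hσ i]
      rw [hfun, AlternatingMap.map_perm, Units.smul_def]
      exact Submodule.smul_mem _ _ (Submodule.subset_span ⟨⟨s, hcard⟩, rfl⟩)
    · have h0 : ¬ Function.Injective (fun i => b (f i)) := by
        intro hinj
        exact hf fun i j hij => hinj (by simp only [hij])
      rw [AlternatingMap.map_eq_zero_of_not_injective _ _ h0]
      exact zero_mem _

/-- Module.Basis of the `p`-th exterior power indexed by `p`-subsets. -/
noncomputable def bX (p : ℕ) : Module.Basis (Sets k p) ℤ ↥(⋀[ℤ]^p (Fin k → ℤ)) :=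
  (Module.Basis.span (eS_linearIndependent b p)).map (LinearEquiv.ofEq _ _ (span_eS b p))

lemma bX_coe (p : ℕ) (s : Sets k p) : (bX b p s : ExteriorAlgebra ℤ (Fin k → ℤ)) = eS b p s := by
  rw [bX]
  simp only [Module.Basis.map_apply]
  rw [show ((LinearEquiv.ofEq _ _ (span_eS b p)) ((Module.Basis.span (eS_linearIndependent b p)) s) :
      ExteriorAlgebra ℤ (Fin k → ℤ)) = ((Module.Basis.span (eS_linearIndependent b p)) s : ExteriorAlgebra ℤ (Fin k → ℤ)) from rfl]
  exact Module.Basis.coe_span_apply _ s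

lemma ι_mul_ιMulti (p : ℕ) (x : Fin k → ℤ) (v : Fin p → (Fin k → ℤ)) :
    ι ℤ x * ιMulti ℤ p v = ιMulti ℤ (p + 1) (Fin.cons x v) := by
  have ht : Matrix.vecTail (Fin.cons x v) = v := funext fun i => by
    simp [Matrix.vecTail, Fin.cons_succ]
  rw [ιMulti_succ_apply, ht, Fin.cons_zero]

lemma ι_mul_eS_of_mem (p : ℕ) (i0 : Fin k) (s : Sets k p) (h : i0 ∈ s.1) :
    ι ℤ (b i0) * eS b p s = 0 := by
  rw [eS, ι_mul_ιMulti]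
  obtain ⟨j, hj⟩ : ∃ j, s.1.orderEmbOfFin s.2 j = i0 := by
    have hr := Finset.range_orderEmbOfFin s.1 s.2
    have : i0 ∈ Set.range ⇑(s.1.orderEmbOfFin s.2) := by rw [hr]; exact_mod_cast h
    exact this
  set w : Fin (p + 1) → (Fin k → ℤ) := Fin.cons (b i0) (fun i => b (s.1.orderEmbOfFin s.2 i))
    with hw
  have hv : w j.succ = w 0 := by
    rw [hw]
    simp only [Fin.cons_zero, Fin.cons_succ, hj]
  exact AlternatingMap.map_eq_zero_of_eq _ _ hv (Fin.succ_ne_zero j)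

lemma ι_mul_eS_of_lt (p : ℕ) (i0 : Fin k) (s : Sets k p) (h : ∀ j ∈ s.1, i0 < j) :
    ι ℤ (b i0) * eS b p s =
      eS b (p + 1) ⟨insert i0 s.1, by
        rw [Finset.card_insert_of_notMem (fun hc => lt_irrefl i0 (h i0 hc)), s.2]⟩ := by
  rw [eS, ι_mul_ιMulti, eS]
  congr 1
  have hsort : Finset.sort (insert i0 s.1) (· ≤ ·) = i0 :: Finset.sort s.1 (· ≤ ·) :=
    Finset.sort_insert _ (fun x hx => le_of_lt (h x hx)) (fun hc => lt_irrefl i0 (h i0 hc))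
  funext i
  refine Fin.cases ?_ (fun j => ?_) i
  · rw [Fin.cons_zero, Finset.orderEmbOfFin_apply]
    congr 1
    simp [hsort]
  · rw [Fin.cons_succ, Finset.orderEmbOfFin_apply, Finset.orderEmbOfFin_apply]
    congr 1
    simp [hsort]

lemma exists_adapted_basis (hk : 0 < k) (w : Fin k → ℤ) (c : Fin k → ℤ)
    (hc : ∑ i, c i * w i = 1) :
    ∃ b : Module.Basis (Fin k) ℤ (Fin k → ℤ), b ⟨0, hk⟩ = w := by
  classical
  set φ : (Fin k → ℤ) →ₗ[ℤ] ℤ := ∑ i, c i • LinearMap.proj i with hφ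
  have hφ_apply : ∀ x, φ x = ∑ i, c i * x i := by
    intro x
    rw [hφ]
    simp [LinearMap.sum_apply, smul_eq_mul]
  have hφw : φ w = 1 := by rw [hφ_apply]; exact hc
  set N := LinearMap.ker φ with hN
  obtain ⟨n, bN⟩ := Submodule.basisOfPid (Pi.basisFun ℤ (Fin k)) N
  set F : Fin (n + 1) → (Fin k → ℤ) := Fin.cons w (fun i => (bN i : Fin k → ℤ)) with hF
  have hφbN : ∀ j, φ ((bN j : Fin k → ℤ)) = 0 := fun j => (bN j).2
  have li : LinearIndependent ℤ F := by
    rw [Fintype.linearIndependent_iff]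
    intro g hg
    have h0 : g 0 = 0 := by
      have := congrArg φ hg
      rw [map_sum, map_zero, Fin.sum_univ_succ] at this
      simp only [hF, Fin.cons_zero, Fin.cons_succ, map_smul, hφw, hφbN, smul_eq_mul,
        mul_one, mul_zero, Finset.sum_const_zero, add_zero] at this
      exact this
    intro i
    refine Fin.cases h0 (fun j => ?_) i
    have hg2 : ∑ j : Fin n, g j.succ • (bN j : Fin k → ℤ) = 0 := by
      have := hg
      rw [Fin.sum_univ_succ, h0, zero_smul, zero_add] at this
      simpa only [hF, Fin.cons_succ] using this
    have hg3 : ∑ j : Fin n, g j.succ • bN j = (0 : N) := by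
      apply Subtype.ext
      push_cast [Submodule.coe_sum, Submodule.coe_smul]
      exact hg2
    exact Fintype.linearIndependent_iff.1 bN.linearIndependent _ hg3 j
  have hspan : ⊤ ≤ Submodule.span ℤ (Set.range F) := by
    intro x _
    have hmem : x - φ x • w ∈ N := by
      rw [hN, LinearMap.mem_ker, map_sub, map_smul, hφw, smul_eq_mul, mul_one, sub_self]
    have hNspan : (N : Submodule ℤ (Fin k → ℤ)) = Submodule.span ℤ (Set.range fun j => (bN j : Fin k → ℤ)) := by
      have h1 : Submodule.span ℤ (Set.range bN) = ⊤ := bN.span_eq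
      have h2 := congrArg (Submodule.map N.subtype) h1
      rw [Submodule.map_span, Submodule.map_top, Submodule.range_subtype] at h2
      have h3 : (⇑N.subtype '' Set.range ⇑bN) = Set.range (fun j => (bN j : Fin k → ℤ)) :=
        (Set.range_comp _ _).symm
      rw [h3] at h2
      exact h2.symm
    have hx : x = φ x • w + (x - φ x • w) := by ring_nf
    rw [hx]
    refine Submodule.add_mem _ (Submodule.smul_mem _ _ ?_) ?_
    · exact Submodule.subset_span ⟨0, by rw [hF, Fin.cons_zero]⟩
    · have := hNspan ▸ hmem
      refine Submodule.span_le.2 ?_ this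
      rintro _ ⟨j, rfl⟩
      exact Submodule.subset_span ⟨j.succ, by rw [hF, Fin.cons_succ]⟩
  let B0 : Module.Basis (Fin (n + 1)) ℤ (Fin k → ℤ) := Module.Basis.mk li hspan
  have hcard : n + 1 = k := by
    have e := B0.indexEquiv (Pi.basisFun ℤ (Fin k))
    have := Fintype.card_congr e
    simpa using this
  refine ⟨B0.reindex (finCongr hcard), ?_⟩
  rw [Module.Basis.reindex_apply, Module.Basis.mk_apply]
  have : (finCongr hcard).symm ⟨0, hk⟩ = 0 := by
    ext
    simp
  rw [this, hF, Fin.cons_zero]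

/-- Coordinate functional w.r.t. the basis `bX`. -/
noncomputable def coord (p : ℕ) (t : Sets k p) : ↥(⋀[ℤ]^p (Fin k → ℤ)) →ₗ[ℤ] ℤ :=
  (Finsupp.lapply t).comp (bX b p).repr.toLinearMap

lemma coord_apply (p : ℕ) (t : Sets k p) (x : ↥(⋀[ℤ]^p (Fin k → ℤ))) :
    coord b p t x = (bX b p).repr x t := rfl

lemma coord_bX (p : ℕ) (s t : Sets k p) :
    coord b p t (bX b p s) = if s = t then 1 else 0 := by
  rw [coord_apply, Module.Basis.repr_self, Finsupp.single_apply]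

lemma eq_zero_iff_coord (p : ℕ) (x : ↥(⋀[ℤ]^p (Fin k → ℤ))) :
    x = 0 ↔ ∀ t, coord b p t x = 0 := by
  constructor
  · rintro rfl t
    rw [map_zero]
  · intro h
    have : (bX b p).repr x = 0 := Finsupp.ext fun t => h t
    exact (LinearEquiv.map_eq_zero_iff _).mp this

lemma coord_ext (p : ℕ) {x y : ↥(⋀[ℤ]^p (Fin k → ℤ))}
    (h : ∀ t, coord b p t x = coord b p t y) : x = y := by
  have h0 := (eq_zero_iff_coord b p (x - y)).2 (fun t => by rw [map_sub, h t, sub_self])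
  exact sub_eq_zero.1 h0

lemma coord_sum (p : ℕ) (c : Sets k p → ℤ) (s : Sets k p) :
    coord b p s (∑ u : Sets k p, c u • bX b p u) = c s := by
  rw [map_sum]
  simp only [map_smul, coord_bX, smul_eq_mul, mul_ite, mul_one, mul_zero]
  rw [Finset.sum_ite_eq' Finset.univ s c, if_pos (Finset.mem_univ s)]

section Main

variable (i0 : Fin k) (g : ℕ) (v : Fin k → ℤ)

lemma wedge_bX_of_mem (p : ℕ) (s : Sets k p) (hvw : v = (g : ℤ) • b i0) (hs : i0 ∈ s.1) :
    wedgeMul k v p (bX b p s) = 0 := by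
  apply Subtype.ext
  show ι ℤ v * (bX b p s : ExteriorAlgebra ℤ (Fin k → ℤ)) = _
  rw [hvw, map_smul, smul_mul_assoc, bX_coe, ι_mul_eS_of_mem b p i0 s hs, smul_zero]
  rfl

lemma wedge_bX_of_not_mem (p : ℕ) (s : Sets k p) (hvw : v = (g : ℤ) • b i0)
    (hmin : ∀ j, i0 ≤ j) (hs : i0 ∉ s.1) :
    wedgeMul k v p (bX b p s) = (g : ℤ) • bX b (p + 1)
      ⟨insert i0 s.1, by rw [Finset.card_insert_of_notMem hs, s.2]⟩ := by
  apply Subtype.ext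
  show ι ℤ v * (bX b p s : ExteriorAlgebra ℤ (Fin k → ℤ)) = _
  rw [Submodule.coe_smul, hvw, map_smul, smul_mul_assoc, bX_coe, bX_coe,
    ι_mul_eS_of_lt b p i0 s (fun j hj => lt_of_le_of_ne (hmin j) (fun he => hs (he ▸ hj)))]

lemma coord_wedge (p : ℕ) (t : Sets k (p + 1)) (hvw : v = (g : ℤ) • b i0)
    (hmin : ∀ j, i0 ≤ j) (x : ↥(⋀[ℤ]^p (Fin k → ℤ))) :
    coord b (p + 1) t (wedgeMul k v p x) =
      if h : i0 ∈ t.1 then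
        (g : ℤ) * coord b p ⟨t.1.erase i0, by rw [Finset.card_erase_of_mem h, t.2, Nat.add_sub_cancel]⟩ x
      else 0 := by
  have key : (coord b (p + 1) t).comp (wedgeMul k v p) =
      if h : i0 ∈ t.1 then
        (g : ℤ) • coord b p ⟨t.1.erase i0, by rw [Finset.card_erase_of_mem h, t.2, Nat.add_sub_cancel]⟩
      else 0 := by
    refine Module.Basis.ext (bX b p) fun s => ?_
    rw [LinearMap.comp_apply]
    by_cases h : i0 ∈ t.1
    · rw [dif_pos h, LinearMap.smul_apply, smul_eq_mul]
      by_cases hs : i0 ∈ s.1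
      · rw [wedge_bX_of_mem b i0 g v p s hvw hs, map_zero, coord_bX, if_neg, mul_zero]
        intro he
        have h2 : (s : Finset (Fin k)) = t.1.erase i0 := congrArg Subtype.val he
        rw [h2] at hs
        exact Finset.notMem_erase i0 t.1 hs
      · rw [wedge_bX_of_not_mem b i0 g v p s hvw hmin hs, map_smul, coord_bX, coord_bX,
          smul_eq_mul]
        congr 1
        refine if_congr ⟨fun h1 => ?_, fun h2 => ?_⟩ rfl rfl
        · have h3 : insert i0 s.1 = t.1 := congrArg Subtype.val h1
          exact Subtype.ext (show (s : Finset (Fin k)) = t.1.erase i0 by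
            rw [← h3, Finset.erase_insert hs])
        · have h3 : (s : Finset (Fin k)) = t.1.erase i0 := congrArg Subtype.val h2
          exact Subtype.ext (show insert i0 s.1 = t.1 by
            rw [h3, Finset.insert_erase h])
    · rw [dif_neg h, LinearMap.zero_apply]
      by_cases hs : i0 ∈ s.1
      · rw [wedge_bX_of_mem b i0 g v p s hvw hs, map_zero]
      · rw [wedge_bX_of_not_mem b i0 g v p s hvw hmin hs, map_smul, coord_bX, smul_eq_mul,
          if_neg, mul_zero]
        intro hc
        apply h
        have h3 : insert i0 s.1 = t.1 := congrArg Subtype.val hc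
        rw [← h3]
        exact Finset.mem_insert_self i0 s.1
  have := congrArg (fun (f : _ →ₗ[ℤ] ℤ) => f x) key
  simp only [LinearMap.comp_apply] at this
  rw [this]
  split_ifs with h
  · rw [LinearMap.smul_apply, smul_eq_mul]
  · rfl

lemma mem_ker_iff (p : ℕ) (hvw : v = (g : ℤ) • b i0) (hmin : ∀ j, i0 ≤ j) (hg0 : g ≠ 0)
    (x : ↥(⋀[ℤ]^p (Fin k → ℤ))) :
    wedgeMul k v p x = 0 ↔ ∀ s : Sets k p, i0 ∉ s.1 → coord b p s x = 0 := by
  rw [eq_zero_iff_coord]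
  constructor
  · intro h s hs
    have hins : (insert i0 s.1).card = p + 1 := by
      rw [Finset.card_insert_of_notMem hs, s.2]
    have := h ⟨insert i0 s.1, hins⟩
    rw [coord_wedge b i0 g v p _ hvw hmin x,
      dif_pos (show i0 ∈ (⟨insert i0 s.1, hins⟩ : Sets k (p+1)).1 from
        Finset.mem_insert_self i0 s.1)] at this
    have hgen : ∀ hp, (⟨((⟨insert i0 s.1, hins⟩ : Sets k (p+1)) : Finset (Fin k)).erase i0, hp⟩
        : Sets k p) = s := fun _ => Subtype.ext (Finset.erase_insert hs)
    rw [hgen] at this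
    rcases mul_eq_zero.1 this with h3 | h3
    · exact absurd (Int.natCast_eq_zero.mp h3) hg0
    · exact h3
  · intro h t
    rw [coord_wedge b i0 g v p t hvw hmin x]
    split_ifs with ht
    · rw [h _ (Finset.notMem_erase i0 t.1), mul_zero]
    · rfl

lemma mem_range_iff (p : ℕ) (hvw : v = (g : ℤ) • b i0) (hmin : ∀ j, i0 ≤ j) (hg0 : g ≠ 0)
    (x : ↥(⋀[ℤ]^(p+1) (Fin k → ℤ)))
    (hsupp : ∀ s : Sets k (p+1), i0 ∉ s.1 → coord b (p+1) s x = 0) :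
    x ∈ LinearMap.range (wedgeMul k v p) ↔
      ∀ t : Sets k (p+1), i0 ∈ t.1 → (g : ℤ) ∣ coord b (p+1) t x := by
  constructor
  · rintro ⟨z, rfl⟩ t ht
    rw [coord_wedge b i0 g v p t hvw hmin z, dif_pos ht]
    exact Dvd.intro _ rfl
  · intro hdvd
    set c : Sets k p → ℤ := fun s => if h : i0 ∈ s.1 then 0 else
        (coord b (p+1) ⟨insert i0 s.1, by rw [Finset.card_insert_of_notMem h, s.2]⟩ x) / g
      with hc
    refine ⟨∑ s : Sets k p, c s • bX b p s, ?_⟩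
    refine coord_ext b (p+1) fun t => ?_
    rw [coord_wedge b i0 g v p t hvw hmin]
    split_ifs with ht
    · rw [coord_sum]
      have h0 : (t.1.erase i0).card = p := by
        rw [Finset.card_erase_of_mem ht, t.2, Nat.add_sub_cancel]
    -- evaluate c at s0
      have e3 : c ⟨t.1.erase i0, h0⟩ = (coord b (p+1)
          ⟨insert i0 ((⟨t.1.erase i0, h0⟩ : Sets k p) : Finset (Fin k)), by
            rw [Finset.card_insert_of_notMem (Finset.notMem_erase i0 t.1),
              Finset.card_erase_of_mem ht, t.2, Nat.add_sub_cancel]⟩ x) / g := by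
        rw [hc]
        dsimp only
        rw [dif_neg (show ¬ i0 ∈ ((⟨t.1.erase i0, h0⟩ : Sets k p) : Finset (Fin k)) from
          Finset.notMem_erase i0 t.1)]
      have e4 : ∀ hp, (⟨insert i0 ((⟨t.1.erase i0, h0⟩ : Sets k p) : Finset (Fin k)), hp⟩
          : Sets k (p+1)) = t := fun _ => Subtype.ext (Finset.insert_erase ht)
      rw [e4] at e3
      rw [e3]
      exact Int.mul_ediv_cancel' (hdvd t ht)
    · exact (hsupp t ht).symm

end Main

lemma bezout (w : Fin k → ℤ) (h1 : Finset.univ.gcd (fun i => (w i).natAbs) = 1) :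
    ∃ c : Fin k → ℤ, ∑ i, c i * w i = 1 := by
  have htop : (Ideal.span (Set.range w) : Ideal ℤ) = ⊤ := by
    obtain ⟨d, hd⟩ := (IsPrincipalIdealRing.principal (Ideal.span (Set.range w))).principal
    have hdvd : ∀ i, d ∣ w i := fun i => by
      have hmem : w i ∈ Ideal.span (Set.range w) := Ideal.subset_span ⟨i, rfl⟩
      rw [hd] at hmem
      exact (Ideal.mem_span_singleton).1 hmem
    have h2 : d.natAbs ∣ 1 :=
      h1 ▸ Finset.dvd_gcd (fun i _ => Int.natAbs_dvd_natAbs.2 (hdvd i))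
    have h3 : IsUnit d := Int.isUnit_iff_natAbs_eq.2 (Nat.dvd_one.1 h2)
    rw [hd]
    exact Ideal.span_singleton_eq_top.2 h3
  have h4 : (1 : ℤ) ∈ Ideal.span (Set.range w) := htop ▸ Submodule.mem_top
  obtain ⟨c, hc⟩ := Submodule.mem_span_range_iff_exists_fun ℤ |>.1 h4
  exact ⟨c, by simpa [smul_eq_mul] using hc⟩

/-- Subsets of card `p+1` containing `i0` correspond to `p`-subsets of the complement. -/
noncomputable def memEquiv (p : ℕ) (i0 : Fin k) :
    {t : Sets k (p + 1) // i0 ∈ t.1} ≃ {S // S ∈ (Finset.univ.erase i0).powersetCard p} where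
  toFun t := ⟨t.1.1.erase i0, Finset.mem_powersetCard.2
    ⟨fun x hx => Finset.mem_erase.2 ⟨(Finset.mem_erase.1 hx).1, Finset.mem_univ x⟩,
     by rw [Finset.card_erase_of_mem t.2, t.1.2, Nat.add_sub_cancel]⟩⟩
  invFun S := ⟨⟨insert i0 S.1, by
      have hni : i0 ∉ S.1 := fun hmem =>
        (Finset.mem_erase.1 ((Finset.mem_powersetCard.1 S.2).1 hmem)).1 rfl
      rw [Finset.card_insert_of_notMem hni, (Finset.mem_powersetCard.1 S.2).2]⟩,
    Finset.mem_insert_self i0 _⟩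
  left_inv t := Subtype.ext (Subtype.ext (Finset.insert_erase t.2))
  right_inv S := Subtype.ext (Finset.erase_insert (fun hmem =>
    (Finset.mem_erase.1 ((Finset.mem_powersetCard.1 S.2).1 hmem)).1 rfl))

lemma card_mem_sets (p : ℕ) (i0 : Fin k) :
    Fintype.card {t : Sets k (p + 1) // i0 ∈ t.1} = (k - 1).choose p := by
  rw [Fintype.card_congr (memEquiv p i0), Fintype.card_coe, Finset.card_powersetCard,
    Finset.card_erase_of_mem (Finset.mem_univ i0), Finset.card_univ, Fintype.card_fin]

/-- Additive equivalence of function spaces along an equivalence of index types. -/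
def piAddCongr {α β Z : Type*} [AddMonoid Z] (e : α ≃ β) : (α → Z) ≃+ (β → Z) :=
  { Equiv.arrowCongr e (Equiv.refl Z) with
    map_add' := fun _ _ => rfl }

section Glue

set_option maxHeartbeats 1000000
set_option synthInstance.maxHeartbeats 200000

variable (i0 : Fin k) (g : ℕ) (v : Fin k → ℤ)

/-- The reduction map from the kernel to functions into `ZMod g`. -/
noncomputable def Fmap (q : ℕ) :
    ↥(LinearMap.ker (wedgeMul k v (q + 1))) →ₗ[ℤ]
      ({t : Sets k (q + 1) // i0 ∈ t.1} → ZMod g) :=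
  AddMonoidHom.toIntLinearMap
  { toFun := fun x T => ((coord b (q + 1) T.1 x.1 : ℤ) : ZMod g)
    map_zero' := by
      funext T
      rw [show ((0 : ↥(LinearMap.ker (wedgeMul k v (q + 1)))) :
        ↥(⋀[ℤ]^(q+1) (Fin k → ℤ))) = 0 from rfl, map_zero]
      simp
    map_add' := by
      intro x y
      funext T
      rw [show ((x + y : ↥(LinearMap.ker (wedgeMul k v (q + 1)))) :
        ↥(⋀[ℤ]^(q+1) (Fin k → ℤ))) = x.1 + y.1 from rfl, map_add]
      push_cast
      rfl }

lemma Fmap_apply (q : ℕ) (x : ↥(LinearMap.ker (wedgeMul k v (q + 1))))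
    (T : {t : Sets k (q + 1) // i0 ∈ t.1}) :
    Fmap b i0 g v q x T = ((coord b (q + 1) T.1 x.1 : ℤ) : ZMod g) := rfl

lemma Fmap_surjective (hvw : v = (g : ℤ) • b i0) (hmin : ∀ j, i0 ≤ j) (hg0 : g ≠ 0)
    (q : ℕ) : Function.Surjective (Fmap b i0 g v q) := by
  classical
  intro y
  have hcs : ∀ T : {t : Sets k (q + 1) // i0 ∈ t.1}, ∃ z : ℤ, ((z : ℤ) : ZMod g) = y T :=
    fun T => ZMod.intCast_surjective (y T)
  choose cz hcz using hcs
  set c : Sets k (q + 1) → ℤ := fun s => if h : i0 ∈ s.1 then cz ⟨s, h⟩ else 0 with hcdef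
  set x0 : ↥(⋀[ℤ]^(q+1) (Fin k → ℤ)) := ∑ s : Sets k (q + 1), c s • bX b (q + 1) s with hx0
  have hx0K : x0 ∈ LinearMap.ker (wedgeMul k v (q + 1)) := by
    rw [LinearMap.mem_ker]
    rw [mem_ker_iff b i0 g v (q + 1) hvw hmin hg0 x0]
    intro s hs
    rw [hx0, coord_sum, hcdef]
    exact dif_neg hs
  refine ⟨⟨x0, hx0K⟩, funext fun T => ?_⟩
  rw [Fmap_apply]
  rw [show ((⟨x0, hx0K⟩ : ↥(LinearMap.ker (wedgeMul k v (q + 1)))) :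
    ↥(⋀[ℤ]^(q+1) (Fin k → ℤ))) = x0 from rfl]
  rw [hx0, coord_sum, hcdef]
  dsimp only
  rw [dif_pos T.2]
  exact hcz T

lemma Fmap_ker (hvw : v = (g : ℤ) • b i0) (hmin : ∀ j, i0 ≤ j) (hg0 : g ≠ 0)
    (q : ℕ) : LinearMap.ker (Fmap b i0 g v q)
    = Submodule.comap (LinearMap.ker (wedgeMul k v (q + 1))).subtype
        (LinearMap.range (wedgeMul k v q)) := by
  ext x
  have hsupp : ∀ s : Sets k (q + 1), i0 ∉ s.1 → coord b (q + 1) s x.1 = 0 :=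
    (mem_ker_iff b i0 g v (q + 1) hvw hmin hg0 x.1).1 (LinearMap.mem_ker.1 x.2)
  rw [LinearMap.mem_ker, Submodule.mem_comap]
  rw [show (LinearMap.ker (wedgeMul k v (q + 1))).subtype x = x.1 from rfl]
  rw [mem_range_iff b i0 g v q hvw hmin hg0 x.1 hsupp]
  constructor
  · intro h0 t ht
    have h1 := congrFun h0 (⟨t, ht⟩ : {t : Sets k (q + 1) // i0 ∈ t.1})
    rw [Fmap_apply] at h1
    exact (ZMod.intCast_zmod_eq_zero_iff_dvd _ g).1 h1
  · intro h0
    funext T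
    rw [Fmap_apply]
    exact (ZMod.intCast_zmod_eq_zero_iff_dvd _ g).2 (h0 T.1 T.2)

end Glue

end Koszul

set_option maxHeartbeats 2000000 in
/-- The Koszul-type complex of wedging with `v = (a_1, …, a_k) ∈ ℤ^k`, `g = gcd(a_i)`,
has cohomology `ker(h^p)/im(h^{p−1}) ≅ (ℤ/gℤ)^{C(k−1, p−1)}` for `1 ≤ p ≤ k`
(here `p = q + 1`), and vanishing cohomology for all other `p`. -/
theorem stmt_10 (k : ℕ) (hk : 1 ≤ k) (v : Fin k → ℤ) (hv : v ≠ 0) (g : ℕ)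
    (hg : Finset.univ.gcd (fun i => (v i).natAbs) = g) :
    (∀ q : ℕ, q + 1 ≤ k →
      Nonempty ((LinearMap.ker (wedgeMul k v (q + 1)) ⧸
          Submodule.comap (LinearMap.ker (wedgeMul k v (q + 1))).subtype
            (LinearMap.range (wedgeMul k v q)))
        ≃+ (Fin (Nat.choose (k - 1) q) → ZMod g))) ∧
    LinearMap.ker (wedgeMul k v 0) = ⊥ ∧
    (∀ q : ℕ, k < q + 1 →
      Subsingleton (LinearMap.ker (wedgeMul k v (q + 1)) ⧸
          Submodule.comap (LinearMap.ker (wedgeMul k v (q + 1))).subtype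
            (LinearMap.range (wedgeMul k v q)))) := by
  classical
  set i0 : Fin k := ⟨0, hk⟩ with hi0
  have hmin : ∀ j : Fin k, i0 ≤ j := fun j => by
    rw [hi0, Fin.le_def]
    exact Nat.zero_le _
  have hg0 : g ≠ 0 := by
    rintro rfl
    apply hv
    funext i
    have h1 := Finset.gcd_eq_zero_iff.1 hg i (Finset.mem_univ i)
    exact Int.natAbs_eq_zero.1 h1
  have hdv : ∀ i, (g : ℤ) ∣ v i := fun i => by
    have h1 : g ∣ (v i).natAbs := hg ▸ Finset.gcd_dvd (Finset.mem_univ i)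
    exact dvd_trans (Int.natCast_dvd_natCast.2 h1) (Int.natAbs_dvd.2 dvd_rfl)
  set w : Fin k → ℤ := fun i => v i / g with hwdef
  have hvw : v = (g : ℤ) • w := funext fun i => by
    rw [Pi.smul_apply, hwdef, smul_eq_mul]
    exact (Int.mul_ediv_cancel' (hdv i)).symm
  have habs : ∀ i, (v i).natAbs = g * (w i).natAbs := fun i => by
    conv_lhs => rw [hvw]
    rw [Pi.smul_apply, smul_eq_mul, Int.natAbs_mul, Int.natAbs_natCast]
  have hgcdw : Finset.univ.gcd (fun i => (w i).natAbs) = 1 := by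
    have h2 : Finset.univ.gcd (fun i => (v i).natAbs)
        = g * Finset.univ.gcd (fun i => (w i).natAbs) := by
      rw [Finset.gcd_congr rfl (fun i _ => habs i)]
      rw [Finset.gcd_mul_left]
      rw [normalize_eq]
    rw [hg] at h2
    have h3 : g * 1 = g * Finset.univ.gcd (fun i => (w i).natAbs) := by
      rw [mul_one]; exact h2
    exact (Nat.eq_of_mul_eq_mul_left (Nat.pos_of_ne_zero hg0) h3).symm
  obtain ⟨c, hc⟩ := Koszul.bezout w hgcdw
  obtain ⟨b, hb⟩ := Koszul.exists_adapted_basis hk w c hc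
  have hvw' : v = (g : ℤ) • b i0 := by
    rw [hi0, hb]
    exact hvw
  refine ⟨?_, ?_, ?_⟩
  · -- main case
    intro q _
    have e1 := Submodule.quotEquivOfEq _ _ (Koszul.Fmap_ker b i0 g v hvw' hmin hg0 q).symm
    have e2 := (Koszul.Fmap b i0 g v q).quotKerEquivOfSurjective
      (Koszul.Fmap_surjective b i0 g v hvw' hmin hg0 q)
    have e3 : ({t : Koszul.Sets k (q + 1) // i0 ∈ t.1} → ZMod g)
        ≃+ (Fin (Nat.choose (k - 1) q) → ZMod g) :=
      Koszul.piAddCongr (Fintype.equivFinOfCardEq (Koszul.card_mem_sets q i0))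
    exact ⟨(e1.toAddEquiv.trans e2.toAddEquiv).trans e3⟩
  · -- degree-zero kernel
    refine (Submodule.eq_bot_iff _).2 fun x hx => ?_
    rw [LinearMap.mem_ker] at hx
    have h1 := (Koszul.mem_ker_iff b i0 g v 0 hvw' hmin hg0 x).1 hx
    have h2 := (Koszul.eq_zero_iff_coord b 0 x).2 fun t => h1 t (by
      rw [Finset.card_eq_zero.1 t.2]
      exact Finset.notMem_empty i0)
    exact h2
  · -- vanishing above top degree
    intro q hqk
    haveI : IsEmpty (Koszul.Sets k (q + 1)) := ⟨fun s => by
      have h1 : s.1.card ≤ k := by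
        have := Finset.card_le_univ s.1
        rwa [Fintype.card_fin] at this
      rw [s.2] at h1
      exact absurd h1 (not_le.2 hqk)⟩
    haveI hss : Subsingleton ↥(⋀[ℤ]^(q+1) (Fin k → ℤ)) := by
      constructor
      intro x y
      exact Koszul.coord_ext b (q+1) fun t => isEmptyElim t
    haveI : Subsingleton ↥(LinearMap.ker (wedgeMul k v (q + 1))) :=
      ⟨fun x y => Subtype.ext (Subsingleton.elim _ _)⟩
    exact (Submodule.Quotient.mk_surjective _).subsingleton
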